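/- Suppose u, v : ℝ^N → ℝ are positive, bounded, integrable solutions of the nonlocal KPP equation J⋆w − w + f(x,w) = 0 in ℝ^N, with u ≤ v pointwise. If for every x the map s ↦ f(x,s)/s is strictly decreasing on (0,∞), then u = v almost everywhere. -/

import Mathlib

open MeasureTheory Real

noncomputable section

theorem stmt_6 (N : ℕ)
    (J : EuclideanSpace ℝ (Fin N) → ℝ)
    (f : EuclideanSpace ℝ (Fin N) → ℝ → ℝ)
    (u v : EuclideanSpace ℝ (Fin N) → ℝ)
    (hJc : Continuous J) (hJpos : ∀ z, 0 ≤ J z) (hJsym : ∀ z, J (-z) = J z)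
    (hJint : Integrable J) (hJmass : ∫ z, J z = 1)
    (hupos : ∀ x, 0 < u x) (hvpos : ∀ x, 0 < v x)
    (hubd : ∃ C, ∀ x, u x ≤ C) (hvbd : ∃ C, ∀ x, v x ≤ C)
    (huint : Integrable u) (hvint : Integrable v)
    (hueq : ∀ x, (∫ y, J (x - y) * u y) - u x + f x (u x) = 0)
    (hveq : ∀ x, (∫ y, J (x - y) * v y) - v x + f x (v x) = 0)
    (hle : ∀ x, u x ≤ v x)
    (hdec : ∀ x s t, 0 < s → s < t → f x t / t < f x s / s) :
    ∀ᵐ x : EuclideanSpace ℝ (Fin N), u x = v x := by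
  obtain ⟨Cv, hCv⟩ := hvbd
  obtain ⟨Cu, hCu⟩ := hubd
  -- product integrability
  have HJu : Integrable (fun p : EuclideanSpace ℝ (Fin N) × EuclideanSpace ℝ (Fin N) =>
      u p.2 * J (p.1 - p.2)) (volume.prod volume) :=
    huint.convolution_integrand (ContinuousLinearMap.mul ℝ ℝ) hJint
  have HJv : Integrable (fun p : EuclideanSpace ℝ (Fin N) × EuclideanSpace ℝ (Fin N) =>
      v p.2 * J (p.1 - p.2)) (volume.prod volume) :=
    hvint.convolution_integrand (ContinuousLinearMap.mul ℝ ℝ) hJint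
  have hvm : AEStronglyMeasurable (fun p : EuclideanSpace ℝ (Fin N) × EuclideanSpace ℝ (Fin N) =>
      v p.1) (volume.prod volume) := hvint.aestronglyMeasurable.comp_fst
  have hum : AEStronglyMeasurable (fun p : EuclideanSpace ℝ (Fin N) × EuclideanSpace ℝ (Fin N) =>
      u p.1) (volume.prod volume) := huint.aestronglyMeasurable.comp_fst
  have HA : Integrable (fun p : EuclideanSpace ℝ (Fin N) × EuclideanSpace ℝ (Fin N) =>
      v p.1 * (u p.2 * J (p.1 - p.2))) (volume.prod volume) := by
    refine HJu.bdd_mul (c := Cv) hvm (Filter.Eventually.of_forall fun p => ?_)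
    rw [Real.norm_eq_abs, abs_of_pos (hvpos _)]; exact hCv _
  have HB : Integrable (fun p : EuclideanSpace ℝ (Fin N) × EuclideanSpace ℝ (Fin N) =>
      u p.1 * (v p.2 * J (p.1 - p.2))) (volume.prod volume) := by
    refine HJv.bdd_mul (c := Cu) hum (Filter.Eventually.of_forall fun p => ?_)
    rw [Real.norm_eq_abs, abs_of_pos (hupos _)]; exact hCu _
  -- the convolution terms
  have hconvA : ∀ x, (∫ y, J (x - y) * u y) = ∫ y, u y * J (x - y) := by
    intro x; congr 1; ext y; ring
  -- A = B via Fubini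
  have hswap : (∫ x, v x * ∫ y, u y * J (x - y)) = ∫ x, u x * ∫ y, v y * J (x - y) := by
    have h1 : (∫ x, v x * ∫ y, u y * J (x - y))
        = ∫ x, ∫ y, v x * (u y * J (x - y)) := by
      congr 1; ext x; rw [integral_const_mul]
    have h2 : (∫ x, u x * ∫ y, v y * J (x - y))
        = ∫ x, ∫ y, u x * (v y * J (x - y)) := by
      congr 1; ext x; rw [integral_const_mul]
    rw [h1, h2, integral_integral_swap HA]
    congr 1; ext y
    have : (∫ x, v x * (u y * J (x - y))) = u y * ∫ x, v x * J (x - y) := by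
      rw [← integral_const_mul]; congr 1; ext x; ring
    rw [this]
    have h3 : (∫ x, J (y - x) * v x) = ∫ x, v x * J (x - y) := by
      congr 1; ext x
      rw [show y - x = -(x - y) by abel, hJsym]; ring
    rw [← h3]
    -- now RHS side: ∫ x', u y * (v x' * J (y - x')) ... but goal is
    -- ∫ x, u y * (v x * J (y - x)) = u y * ∫ x, J (y - x) * v x
    rw [← integral_const_mul]
    congr 1; ext x; ring
  -- integrability of the two x-functions
  have hI1 : Integrable (fun x => v x * ∫ y, u y * J (x - y)) := by
    refine HA.integral_prod_left.congr (Filter.Eventually.of_forall fun x => ?_)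
    simp only [integral_const_mul]
  have hI2 : Integrable (fun x => u x * ∫ y, v y * J (x - y)) := by
    refine HB.integral_prod_left.congr (Filter.Eventually.of_forall fun x => ?_)
    simp only [integral_const_mul]
  set g : EuclideanSpace ℝ (Fin N) → ℝ :=
    fun x => u x * (∫ y, v y * J (x - y)) - v x * (∫ y, u y * J (x - y)) with hg
  have hgint : Integrable g := hI2.sub hI1
  have hgzero : ∫ x, g x = 0 := by
    rw [hg]; simp only []
    rw [integral_sub hI2 hI1, hswap, sub_self]
  have key : ∀ x, g x = v x * f x (u x) - u x * f x (v x) := by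
    intro x
    have h1 : f x (u x) = u x - ∫ y, u y * J (x - y) := by
      have := hueq x; rw [hconvA] at this; linarith
    have h2 : f x (v x) = v x - ∫ y, v y * J (x - y) := by
      have := hveq x
      have hc : (∫ y, J (x - y) * v y) = ∫ y, v y * J (x - y) := by
        congr 1; ext y; ring
      rw [hc] at this; linarith
    rw [hg, h1, h2]; ring
  have hstrict : ∀ x, u x < v x → 0 < g x := by
    intro x hx
    have hd := hdec x (u x) (v x) (hupos x) hx
    rw [div_lt_div_iff₀ (hvpos x) (hupos x)] at hd
    rw [key x]; nlinarith
  have hgpos : 0 ≤ g := by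
    intro x
    rcases eq_or_lt_of_le (hle x) with h | h
    · rw [key x, h]; simp
    · exact le_of_lt (hstrict x h)
  have hae : g =ᵐ[volume] 0 :=
    (integral_eq_zero_iff_of_nonneg hgpos hgint).mp hgzero
  filter_upwards [hae] with x hx
  by_contra h'
  have hlt : u x < v x := lt_of_le_of_ne (hle x) h'
  have := hstrict x hlt
  simp only [Pi.zero_apply] at hx
  linarith
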